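/- Let X be a real Banach space containing an isomorphic copy of c₀ and possessing a countable norming system of functionals. Then X is isomorphic to a closed subspace X₁ of ℓ∞ containing the canonical copy of c₀ inside ℓ∞. -/

import Mathlib

noncomputable section
open NormedSpace ZeroAtInfty Filter Topology

/-- `X` contains an isomorphic copy of `c₀`. -/
def ContainsC0 (X : Type*) [NormedAddCommGroup X] [NormedSpace ℝ X] : Prop :=
  ∃ T : C₀(ℕ, ℝ) →L[ℝ] X, ∃ c > 0, ∀ u : C₀(ℕ, ℝ), c * ‖u‖ ≤ ‖T u‖

/-- `X` possesses a countable norming system of functionals. -/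
def HasCountableNormingSystem (X : Type*) [NormedAddCommGroup X] [NormedSpace ℝ X] : Prop :=
  ∃ (g : ℕ → StrongDual ℝ X) (K M : ℝ), 0 ≤ K ∧ (∀ n, ‖g n‖ ≤ M) ∧
    ∀ x : X, ‖x‖ ≤ K * ⨆ n, |g n x|

/-- The space `ℓ∞` of bounded real sequences. -/
abbrev ellInfty : Type := lp (fun _ : ℕ => ℝ) ⊤

namespace IsoC0Aux

/-! ### basic coordinate lemmas for `ellInfty` -/

lemma coord_le (y : ellInfty) (n : ℕ) : |y n| ≤ ‖y‖ := by
  have := lp.norm_apply_le_norm (E := fun _ : ℕ => ℝ) ENNReal.top_ne_zero y n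
  rwa [Real.norm_eq_abs] at this

lemma norm_le_of (y : ellInfty) {C : ℝ} (hC : 0 ≤ C) (h : ∀ n, |y n| ≤ C) : ‖y‖ ≤ C :=
  lp.norm_le_of_forall_le hC (fun n => by simpa [Real.norm_eq_abs] using h n)

lemma add_apply (y z : ellInfty) (n : ℕ) : (y + z) n = y n + z n := by
  simp [lp.coeFn_add]

lemma sub_apply (y z : ellInfty) (n : ℕ) : (y - z) n = y n - z n := by
  simp [lp.coeFn_sub]

lemma smul_apply (c : ℝ) (y : ellInfty) (n : ℕ) : (c • y) n = c * y n := by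
  simp [lp.coeFn_smul]

/-! ### C₀ lemmas -/

lemma c0_coord_le (u : C₀(ℕ, ℝ)) (n : ℕ) : |u n| ≤ ‖u‖ := by
  calc |u n| = ‖u.toBCF n‖ := rfl
  _ ≤ ‖u.toBCF‖ := BoundedContinuousFunction.norm_coe_le_norm _ _
  _ = ‖u‖ := ZeroAtInftyContinuousMap.norm_toBCF_eq_norm

lemma c0_norm_le (u : C₀(ℕ, ℝ)) {C : ℝ} (hC : 0 ≤ C) (h : ∀ n, |u n| ≤ C) : ‖u‖ ≤ C := by
  rw [← ZeroAtInftyContinuousMap.norm_toBCF_eq_norm]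
  exact (BoundedContinuousFunction.norm_le hC).mpr (fun n => by simpa [Real.norm_eq_abs] using h n)

def c0mk (f : ℕ → ℝ) (hf : Tendsto f atTop (𝓝 0)) : C₀(ℕ, ℝ) :=
  ⟨⟨f, continuous_of_discreteTopology⟩, by
    rw [cocompact_eq_cofinite, Nat.cofinite_eq_atTop]; exact hf⟩

@[simp] lemma c0mk_apply (f : ℕ → ℝ) (hf) (n : ℕ) : c0mk f hf n = f n := rfl

lemma c0_tendsto (u : C₀(ℕ, ℝ)) : Tendsto (fun n => u n) atTop (𝓝 0) := by
  have h := zero_at_infty u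
  rwa [cocompact_eq_cofinite, Nat.cofinite_eq_atTop] at h

/-! ### ultrafilter limits -/

def ulim (f : ℕ → ℝ) : ℝ := limUnder (Filter.hyperfilter ℕ : Filter ℕ) f

lemma exists_ulim {f : ℕ → ℝ} {C : ℝ} (h : ∀ n, |f n| ≤ C) :
    ∃ l, Tendsto f (Filter.hyperfilter ℕ : Filter ℕ) (𝓝 l) := by
  have hmem : Set.Icc (-C) C ∈ Ultrafilter.map f (Filter.hyperfilter ℕ) := by
    have h2 : ∀ n, f n ∈ Set.Icc (-C) C := fun n => abs_le.mp (h n)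
    exact Filter.mem_map.mpr (Filter.univ_mem' h2)
  obtain ⟨a, -, ha⟩ := isCompact_Icc.ultrafilter_le_nhds (Ultrafilter.map f (Filter.hyperfilter ℕ))
    (Filter.le_principal_iff.mpr hmem)
  refine ⟨a, ?_⟩
  rw [Filter.Tendsto, ← Ultrafilter.coe_map]
  exact ha

lemma ulim_spec {f : ℕ → ℝ} {C : ℝ} (h : ∀ n, |f n| ≤ C) :
    Tendsto f (Filter.hyperfilter ℕ : Filter ℕ) (𝓝 (ulim f)) :=
  tendsto_nhds_limUnder (exists_ulim h)

lemma ulim_eq {f : ℕ → ℝ} {l : ℝ} (h : Tendsto f (Filter.hyperfilter ℕ : Filter ℕ) (𝓝 l)) :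
    ulim f = l :=
  h.limUnder_eq

lemma ulim_of_tendsto_atTop {f : ℕ → ℝ} {l : ℝ} (h : Tendsto f atTop (𝓝 l)) : ulim f = l :=
  ulim_eq (h.mono_left (by rw [← Nat.cofinite_eq_atTop]; exact Filter.hyperfilter_le_cofinite))

/-! ### the chained limit functionals -/

def pos (t k i : ℕ) : ℕ := Nat.pair (Nat.pair t k) i

def Lf (t k : ℕ) (y : ellInfty) : ℝ := ulim (fun i => y (pos t k i))

lemma Lf_spec (t k : ℕ) (y : ellInfty) :
    Tendsto (fun i => y (pos t k i)) (Filter.hyperfilter ℕ : Filter ℕ) (𝓝 (Lf t k y)) :=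
  ulim_spec (C := ‖y‖) (fun i => coord_le y _)

lemma Lf_abs (t k : ℕ) (y : ellInfty) : |Lf t k y| ≤ ‖y‖ :=
  le_of_tendsto ((Lf_spec t k y).abs) (Filter.Eventually.of_forall (fun i => coord_le y _))

lemma Lf_add (t k : ℕ) (y z : ellInfty) : Lf t k (y + z) = Lf t k y + Lf t k z := by
  apply ulim_eq
  have h := (Lf_spec t k y).add (Lf_spec t k z)
  exact h.congr (fun i => (add_apply y z _).symm)

lemma Lf_smul (t k : ℕ) (c : ℝ) (y : ellInfty) : Lf t k (c • y) = c * Lf t k y := by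
  apply ulim_eq
  have h := (Lf_spec t k y).const_mul c
  exact h.congr (fun i => (smul_apply c y _).symm)

lemma tendsto_pos_atTop (t k : ℕ) : Tendsto (fun i => pos t k i) atTop atTop := by
  rw [← Nat.cofinite_eq_atTop]
  exact Function.Injective.tendsto_cofinite (fun a b hab => by
    have := Nat.pair_eq_pair.mp hab
    exact this.2)

lemma Lf_null (t k : ℕ) (y : ellInfty) (h : Tendsto (fun n => y n) atTop (𝓝 (0:ℝ))) :
    Lf t k y = 0 :=
  ulim_of_tendsto_atTop (h.comp (tendsto_pos_atTop t k))

def tOf (n : ℕ) : ℕ := (Nat.unpair (Nat.unpair n).1).1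
def kOf (n : ℕ) : ℕ := (Nat.unpair (Nat.unpair n).1).2

@[simp] lemma tOf_pos (t k i : ℕ) : tOf (pos t k i) = t := by simp [tOf, pos]
@[simp] lemma kOf_pos (t k i : ℕ) : kOf (pos t k i) = k := by simp [kOf, pos]

/-! ### a builder for operators into `ℓ∞` -/

def mkop {E : Type*} [NormedAddCommGroup E] [NormedSpace ℝ E]
    (F : E → ℕ → ℝ) (C : ℝ) (hC : 0 ≤ C)
    (hadd : ∀ x y n, F (x + y) n = F x n + F y n)
    (hsmul : ∀ (c : ℝ) x n, F (c • x) n = c * F x n)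
    (hb : ∀ x n, |F x n| ≤ C * ‖x‖) : E →L[ℝ] ellInfty :=
  LinearMap.mkContinuous
    { toFun := fun x => (⟨F x, memℓp_infty ⟨C * ‖x‖, by
        rintro r ⟨n, rfl⟩
        simpa [Real.norm_eq_abs] using hb x n⟩⟩ : ellInfty)
      map_add' := fun x y => by
        apply Subtype.ext; funext n; exact hadd x y n
      map_smul' := fun c x => by
        apply Subtype.ext; funext n; exact hsmul c x n }
    C (fun x => lp.norm_le_of_forall_le (by positivity) fun n => by
        simpa [Real.norm_eq_abs] using hb x n)

theorem mkop_apply {E : Type*} [NormedAddCommGroup E] [NormedSpace ℝ E]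
    (F : E → ℕ → ℝ) (C : ℝ) (hC : 0 ≤ C) (hadd) (hsmul)
    (hb : ∀ x n, |F x n| ≤ C * ‖x‖) (x : E) (n : ℕ) :
    (mkop F C hC hadd hsmul hb) x n = F x n := rfl

theorem mkop_norm_le {E : Type*} [NormedAddCommGroup E] [NormedSpace ℝ E]
    (F : E → ℕ → ℝ) (C : ℝ) (hC : 0 ≤ C) (hadd) (hsmul)
    (hb : ∀ x n, |F x n| ≤ C * ‖x‖) (x : E) :
    ‖(mkop F C hC hadd hsmul hb) x‖ ≤ C * ‖x‖ :=
  norm_le_of _ (by positivity) (fun n => hb x n)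

/-! ### the operator ψ -/

def prevL (t k : ℕ) (y : ellInfty) : ℝ := if k = 0 then 0 else Lf t (k - 1) y

lemma prevL_abs (t k : ℕ) (y : ellInfty) : |prevL t k y| ≤ ‖y‖ := by
  unfold prevL; split
  · rw [abs_zero]; exact norm_nonneg y
  · exact Lf_abs _ _ y

def Fψ (y : ellInfty) (n : ℕ) : ℝ := y n - (Lf (tOf n) (kOf n) y - prevL (tOf n) (kOf n) y)

def ψop : ellInfty →L[ℝ] ellInfty :=
  mkop Fψ 3 (by norm_num)
    (fun y z n => by
      unfold Fψ prevL
      rw [add_apply, Lf_add]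
      split <;> [skip; rw [Lf_add]] <;> ring)
    (fun c y n => by
      unfold Fψ prevL
      rw [smul_apply, Lf_smul]
      split <;> [skip; rw [Lf_smul]] <;> ring)
    (fun y n => by
      unfold Fψ
      have h1 := coord_le y n
      have h2 := Lf_abs (tOf n) (kOf n) y
      have h3 := prevL_abs (tOf n) (kOf n) y
      have h4 : (3:ℝ) * ‖y‖ = ‖y‖ + (‖y‖ + ‖y‖) := by ring
      rw [h4]
      calc |y n - (Lf (tOf n) (kOf n) y - prevL (tOf n) (kOf n) y)|
          ≤ |y n| + |Lf (tOf n) (kOf n) y - prevL (tOf n) (kOf n) y| := abs_sub _ _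
        _ ≤ |y n| + (|Lf (tOf n) (kOf n) y| + |prevL (tOf n) (kOf n) y|) := by
            gcongr; exact abs_sub _ _
        _ ≤ ‖y‖ + (‖y‖ + ‖y‖) := by gcongr)

lemma ψop_apply (y : ellInfty) (n : ℕ) : ψop y n = Fψ y n := rfl

lemma ψop_coord (t k i : ℕ) (y : ellInfty) :
    ψop y (pos t k i) = y (pos t k i) - (Lf t k y - prevL t k y) := by
  rw [ψop_apply]; unfold Fψ; rw [tOf_pos, kOf_pos]

lemma Lf_ψop_zero (t : ℕ) (y : ellInfty) : Lf t 0 (ψop y) = 0 := by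
  have h : Tendsto (fun i => (ψop y) (pos t 0 i)) (Filter.hyperfilter ℕ : Filter ℕ)
      (𝓝 (Lf t 0 y - (Lf t 0 y - prevL t 0 y))) := by
    have := (Lf_spec t 0 y).sub_const (Lf t 0 y - prevL t 0 y)
    exact this.congr (fun i => (ψop_coord t 0 i y).symm)
  have h2 := tendsto_nhds_unique (Lf_spec t 0 (ψop y)) h
  rw [h2]; unfold prevL; simp

lemma Lf_ψop_chain (t k : ℕ) (y : ellInfty) : Lf t (k+1) (ψop y) = Lf t k y := by
  have h : Tendsto (fun i => (ψop y) (pos t (k+1) i)) (Filter.hyperfilter ℕ : Filter ℕ)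
      (𝓝 (Lf t (k+1) y - (Lf t (k+1) y - prevL t (k+1) y))) := by
    have := (Lf_spec t (k+1) y).sub_const (Lf t (k+1) y - prevL t (k+1) y)
    exact this.congr (fun i => (ψop_coord t (k+1) i y).symm)
  have h2 := tendsto_nhds_unique (Lf_spec t (k+1) (ψop y)) h
  rw [h2]; unfold prevL; simp

lemma ψop_recover (y : ellInfty) : ‖y‖ ≤ 3 * ‖ψop y‖ := by
  apply norm_le_of y (by positivity)
  intro n
  have hy : y n = ψop y n + (Lf (tOf n) (kOf n) y - prevL (tOf n) (kOf n) y) := by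
    rw [ψop_apply]; unfold Fψ; ring
  have h1 : |Lf (tOf n) (kOf n) y| ≤ ‖ψop y‖ := by
    rw [← Lf_ψop_chain (tOf n) (kOf n) y]; exact Lf_abs _ _ _
  have h2 : |prevL (tOf n) (kOf n) y| ≤ ‖ψop y‖ := by
    unfold prevL; split
    · rw [abs_zero]; exact norm_nonneg (ψop y)
    · calc |Lf (tOf n) (kOf n - 1) y| = |Lf (tOf n) ((kOf n - 1) + 1) (ψop y)| := by
            rw [Lf_ψop_chain]
        _ ≤ ‖ψop y‖ := Lf_abs _ _ _
  have h0 := coord_le (ψop y) n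
  rw [hy]
  have h4 : (3:ℝ) * ‖ψop y‖ = ‖ψop y‖ + (‖ψop y‖ + ‖ψop y‖) := by ring
  rw [h4]
  calc |ψop y n + (Lf (tOf n) (kOf n) y - prevL (tOf n) (kOf n) y)|
      ≤ |ψop y n| + |Lf (tOf n) (kOf n) y - prevL (tOf n) (kOf n) y| := abs_add_le _ _
    _ ≤ |ψop y n| + (|Lf (tOf n) (kOf n) y| + |prevL (tOf n) (kOf n) y|) := by
        gcongr; exact abs_sub _ _
    _ ≤ ‖ψop y‖ + (‖ψop y‖ + ‖ψop y‖) := by gcongr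

lemma ψop_of_null (y : ellInfty) (h : Tendsto (fun n => y n) atTop (𝓝 (0:ℝ))) :
    ψop y = y := by
  apply Subtype.ext; funext n
  rw [ψop_apply]; unfold Fψ prevL
  rw [Lf_null _ _ y h]
  split
  · ring
  · rw [Lf_null _ _ y h]; ring

/-! ### the operator e' -/

def Fe (v : ellInfty) (n : ℕ) : ℝ := if kOf n = 0 then v (tOf n) else 0

def eop : ellInfty →L[ℝ] ellInfty :=
  mkop Fe 1 (by norm_num)
    (fun v w n => by
      unfold Fe; split
      · exact add_apply v w _
      · ring)
    (fun c v n => by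
      unfold Fe; split
      · exact smul_apply c v _
      · ring)
    (fun v n => by
      unfold Fe; rw [one_mul]; split
      · exact coord_le v _
      · rw [abs_zero]; exact norm_nonneg v)

lemma Lf_eop (t : ℕ) (v : ellInfty) : Lf t 0 (eop v) = v t := by
  have h : Tendsto (fun i => (eop v) (pos t 0 i)) (Filter.hyperfilter ℕ : Filter ℕ)
      (𝓝 (v t)) := by
    apply tendsto_const_nhds.congr (fun i => ?_)
    have : eop v (pos t 0 i) = Fe v (pos t 0 i) := rfl
    rw [this]; unfold Fe; rw [tOf_pos, kOf_pos]; simp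
  exact tendsto_nhds_unique (Lf_spec t 0 (eop v)) h

lemma eop_norm_le (v : ellInfty) : ‖eop v‖ ≤ ‖v‖ := by
  apply norm_le_of _ (norm_nonneg v)
  intro n
  have : eop v n = Fe v n := rfl
  rw [this]; unfold Fe; split
  · exact coord_le v _
  · rw [abs_zero]; exact norm_nonneg v

end IsoC0Aux

open IsoC0Aux in
set_option maxHeartbeats 1000000 in
theorem isomorphic_to_subspace_of_ellInfty_containing_c0
    (X : Type*) [NormedAddCommGroup X] [NormedSpace ℝ X] [CompleteSpace X]
    (hc0 : ContainsC0 X) (hns : HasCountableNormingSystem X) :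
    ∃ X₁ : Submodule ℝ ellInfty, IsClosed (X₁ : Set ellInfty) ∧
      (∀ y : ellInfty, Tendsto (fun n => y n) atTop (𝓝 (0 : ℝ)) → y ∈ X₁) ∧
      Nonempty (X ≃L[ℝ] X₁) := by
  classical
  obtain ⟨T, c, hc, hT⟩ := hc0
  obtain ⟨g, K, M, hK0, hgM, hnorm⟩ := hns
  -- a nonzero element of C₀
  have h0null : Tendsto (fun n : ℕ => if n = 0 then (1:ℝ) else 0) atTop (𝓝 0) := by
    apply tendsto_const_nhds.congr'
    filter_upwards [eventually_ge_atTop 1] with n hn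
    rw [if_neg (by omega)]
  have he0 : (1:ℝ) ≤ ‖c0mk _ h0null‖ := by
    have h := c0_coord_le (c0mk _ h0null) 0
    simpa using h
  have hKpos : 0 < K := by
    rcases hK0.lt_or_eq with h | h
    · exact h
    · exfalso
      have h1 := hnorm (T (c0mk _ h0null))
      rw [← h, zero_mul] at h1
      have h2 := hT (c0mk _ h0null)
      nlinarith
  have hM0 : 0 ≤ M := le_trans (norm_nonneg (g 0)) (hgM 0)
  -- the norming embedding J
  obtain ⟨J, hJcoord⟩ : ∃ J : X →L[ℝ] ellInfty, ∀ (x : X) (n : ℕ), J x n = g n x := by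
    refine ⟨mkop (fun x n => g n x) M hM0
      (fun x y n => by simp) (fun r x n => by simp)
      (fun x n => ?_), fun x n => rfl⟩
    calc |g n x| ≤ ‖g n‖ * ‖x‖ := by
          have h := (g n).le_opNorm x
          rwa [Real.norm_eq_abs] at h
      _ ≤ M * ‖x‖ := mul_le_mul_of_nonneg_right (hgM n) (norm_nonneg x)
  have hJlow : ∀ x : X, ‖x‖ ≤ K * ‖J x‖ := by
    intro x
    refine (hnorm x).trans ?_
    have h1 : (⨆ n, |g n x|) ≤ ‖J x‖ :=
      ciSup_le (fun n => by rw [← hJcoord x n]; exact coord_le _ n)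
    exact mul_le_mul_of_nonneg_left h1 hK0
  -- the embedding of the copy of c₀ and the inclusion ι of c₀ into ℓ∞
  obtain ⟨S, hSJT, hScoord⟩ : ∃ S : C₀(ℕ, ℝ) →L[ℝ] ellInfty,
      (∀ u, S u = J (T u)) ∧ (∀ (u : C₀(ℕ, ℝ)) (n : ℕ), S u n = g n (T u)) :=
    ⟨J.comp T, fun u => rfl, fun u n => hJcoord (T u) n⟩
  set δ : ℝ := c / K with hδdef
  have hδ : 0 < δ := div_pos hc hKpos
  have hSlow : ∀ u, δ * ‖u‖ ≤ ‖S u‖ := by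
    intro u
    have h1 : c * ‖u‖ ≤ K * ‖S u‖ := by
      rw [hSJT u]; exact (hT u).trans (hJlow (T u))
    rw [hδdef, div_mul_eq_mul_div, div_le_iff₀ hKpos]
    nlinarith
  have hSinj : Function.Injective S := by
    intro u v huv
    have h := hSlow (u - v)
    rw [map_sub, huv, sub_self, norm_zero] at h
    have h2 : ‖u - v‖ ≤ 0 := by nlinarith [norm_nonneg (u - v)]
    exact sub_eq_zero.mp (norm_le_zero_iff.mp h2)
  obtain ⟨ι, hιcoord⟩ : ∃ ι : C₀(ℕ, ℝ) →L[ℝ] ellInfty,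
      ∀ (u : C₀(ℕ, ℝ)) (n : ℕ), ι u n = u n :=
    ⟨mkop (fun u n => u n) 1 (by norm_num)
      (fun u v n => by simp) (fun r u n => by simp)
      (fun u n => by rw [one_mul]; exact c0_coord_le u n), fun u n => rfl⟩
  have hιnorm : ∀ u, ‖u‖ ≤ ‖ι u‖ := fun u =>
    c0_norm_le u (norm_nonneg (ι u)) (fun n => by rw [← hιcoord u n]; exact coord_le _ n)
  have hιinj : Function.Injective ι := by
    intro u v huv
    ext n
    rw [← hιcoord u n, ← hιcoord v n, huv]
  -- the Hahn–Banach extension operator Q with Q ∘ S = ι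
  obtain ⟨Q, hQS⟩ : ∃ Q : ellInfty →L[ℝ] ellInfty, ∀ u : C₀(ℕ, ℝ), Q (S u) = ι u := by
    have hSlinj : Function.Injective (S : C₀(ℕ, ℝ) →ₗ[ℝ] ellInfty) := by simpa using hSinj
    set eqv := LinearEquiv.ofInjective (S : C₀(ℕ, ℝ) →ₗ[ℝ] ellInfty) hSlinj with heqv
    have hsymmS : ∀ u : C₀(ℕ, ℝ),
        eqv.symm ⟨S u, LinearMap.mem_range_self _ u⟩ = u := by
      intro u
      apply eqv.injective
      apply Subtype.ext
      rw [heqv]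
      simp [LinearEquiv.ofInjective_apply]
    have hinvS : ∀ w : LinearMap.range (S : C₀(ℕ, ℝ) →ₗ[ℝ] ellInfty),
        S (eqv.symm w) = (w : ellInfty) := by
      intro w
      obtain ⟨u, hu⟩ := w.2
      have hw : w = ⟨S u, LinearMap.mem_range_self _ u⟩ := by
        apply Subtype.ext; simp [← hu]
      rw [hw, hsymmS]
    have hqbound : ∀ (w : LinearMap.range (S : C₀(ℕ, ℝ) →ₗ[ℝ] ellInfty)) (n : ℕ),
        |(eqv.symm w) n| ≤ δ⁻¹ * ‖w‖ := by
      intro w n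
      have h1 : |(eqv.symm w) n| ≤ ‖eqv.symm w‖ := c0_coord_le _ n
      have h2 : δ * ‖eqv.symm w‖ ≤ ‖(w : ellInfty)‖ := by
        rw [← hinvS w]; exact hSlow _
      have h3 : ‖(w : ellInfty)‖ = ‖w‖ := rfl
      have h4 : ‖eqv.symm w‖ ≤ δ⁻¹ * ‖(w : ellInfty)‖ := by
        rw [inv_mul_eq_div, le_div_iff₀ hδ]
        nlinarith
      calc |(eqv.symm w) n| ≤ ‖eqv.symm w‖ := h1
        _ ≤ δ⁻¹ * ‖(w : ellInfty)‖ := h4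
        _ = δ⁻¹ * ‖w‖ := by rw [h3]
    have hQex : ∀ n : ℕ, ∃ Qn : ellInfty →L[ℝ] ℝ,
        (∀ w : LinearMap.range (S : C₀(ℕ, ℝ) →ₗ[ℝ] ellInfty),
          Qn w = (eqv.symm w) n) ∧ ‖Qn‖ ≤ δ⁻¹ := by
      intro n
      obtain ⟨Qn, hext, hnrm⟩ := exists_extension_norm_eq
        (LinearMap.range (S : C₀(ℕ, ℝ) →ₗ[ℝ] ellInfty))
        (LinearMap.mkContinuous
          { toFun := fun w => (eqv.symm w) n
            map_add' := fun w w' => by simp [map_add]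
            map_smul' := fun r w => by simp [map_smul] }
          δ⁻¹ (fun w => by rw [Real.norm_eq_abs]; exact hqbound w n))
      refine ⟨Qn, fun w => hext w, ?_⟩
      rw [hnrm]
      exact LinearMap.mkContinuous_norm_le _ (by positivity) _
    choose Qn hQna hQnb using hQex
    have hQnle : ∀ n y, |Qn n y| ≤ δ⁻¹ * ‖y‖ := by
      intro n y
      calc |Qn n y| ≤ ‖Qn n‖ * ‖y‖ := by
            have h := (Qn n).le_opNorm y
            rwa [Real.norm_eq_abs] at h
        _ ≤ δ⁻¹ * ‖y‖ := mul_le_mul_of_nonneg_right (hQnb n) (norm_nonneg y)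
    refine ⟨mkop (fun y n => Qn n y) δ⁻¹ (by positivity)
      (fun y z n => by simp) (fun r y n => by simp)
      (fun y n => hQnle n y), ?_⟩
    intro u
    apply Subtype.ext; funext n
    have h1 := hQna n ⟨S u, LinearMap.mem_range_self _ u⟩
    calc (mkop (fun y n => Qn n y) δ⁻¹ (by positivity)
        (fun y z n => by simp) (fun r y n => by simp)
        (fun y n => hQnle n y)) (S u) n = Qn n (S u) := rfl
      _ = (eqv.symm ⟨S u, LinearMap.mem_range_self _ u⟩) n := h1
      _ = u n := by rw [hsymmS u]
      _ = ι u n := (hιcoord u n).symm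
  -- the Hahn–Banach extension operator W with W ∘ ι = S
  obtain ⟨W, hWι, hWb⟩ : ∃ W : ellInfty →L[ℝ] ellInfty,
      (∀ u : C₀(ℕ, ℝ), W (ι u) = S u) ∧ (∀ y, ‖W y‖ ≤ M * ‖T‖ * ‖y‖) := by
    have hιlinj : Function.Injective (ι : C₀(ℕ, ℝ) →ₗ[ℝ] ellInfty) := by simpa using hιinj
    set eqv2 := LinearEquiv.ofInjective (ι : C₀(ℕ, ℝ) →ₗ[ℝ] ellInfty) hιlinj with heqv2
    have hsymmι : ∀ u : C₀(ℕ, ℝ),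
        eqv2.symm ⟨ι u, LinearMap.mem_range_self _ u⟩ = u := by
      intro u
      apply eqv2.injective
      apply Subtype.ext
      rw [heqv2]
      simp [LinearEquiv.ofInjective_apply]
    have hinvι : ∀ w : LinearMap.range (ι : C₀(ℕ, ℝ) →ₗ[ℝ] ellInfty),
        ι (eqv2.symm w) = (w : ellInfty) := by
      intro w
      obtain ⟨u, hu⟩ := w.2
      have hw : w = ⟨ι u, LinearMap.mem_range_self _ u⟩ := by
        apply Subtype.ext; simp [← hu]
      rw [hw, hsymmι]
    have hwbound : ∀ (w : LinearMap.range (ι : C₀(ℕ, ℝ) →ₗ[ℝ] ellInfty)) (n : ℕ),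
        |g n (T (eqv2.symm w))| ≤ M * ‖T‖ * ‖w‖ := by
      intro w n
      have h2 : ‖eqv2.symm w‖ ≤ ‖w‖ := by
        have h3 := hιnorm (eqv2.symm w)
        rw [hinvι w] at h3
        exact h3
      calc |g n (T (eqv2.symm w))| ≤ M * ‖T (eqv2.symm w)‖ := by
            have h1 := (g n).le_opNorm (T (eqv2.symm w))
            rw [Real.norm_eq_abs] at h1
            exact h1.trans (mul_le_mul_of_nonneg_right (hgM n) (norm_nonneg _))
        _ ≤ M * (‖T‖ * ‖eqv2.symm w‖) :=
            mul_le_mul_of_nonneg_left (T.le_opNorm _) hM0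
        _ ≤ M * (‖T‖ * ‖w‖) := by
            have h4 : (0:ℝ) ≤ M * ‖T‖ := by positivity
            nlinarith [norm_nonneg (eqv2.symm w), norm_nonneg (w : ellInfty)]
        _ = M * ‖T‖ * ‖w‖ := by ring
    have hWex : ∀ n : ℕ, ∃ Wn : ellInfty →L[ℝ] ℝ,
        (∀ w : LinearMap.range (ι : C₀(ℕ, ℝ) →ₗ[ℝ] ellInfty),
          Wn w = g n (T (eqv2.symm w))) ∧ ‖Wn‖ ≤ M * ‖T‖ := by
      intro n
      obtain ⟨Wn, hext, hnrm⟩ := exists_extension_norm_eq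
        (LinearMap.range (ι : C₀(ℕ, ℝ) →ₗ[ℝ] ellInfty))
        (LinearMap.mkContinuous
          { toFun := fun w => g n (T (eqv2.symm w))
            map_add' := fun w w' => by simp [map_add]
            map_smul' := fun r w => by simp [map_smul] }
          (M * ‖T‖) (fun w => by rw [Real.norm_eq_abs]; exact hwbound w n))
      refine ⟨Wn, fun w => hext w, ?_⟩
      rw [hnrm]
      exact LinearMap.mkContinuous_norm_le _ (by positivity) _
    choose Wn hWna hWnb using hWex
    have hWnle : ∀ n y, |Wn n y| ≤ M * ‖T‖ * ‖y‖ := by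
      intro n y
      calc |Wn n y| ≤ ‖Wn n‖ * ‖y‖ := by
            have h := (Wn n).le_opNorm y
            rwa [Real.norm_eq_abs] at h
        _ ≤ M * ‖T‖ * ‖y‖ := mul_le_mul_of_nonneg_right (hWnb n) (norm_nonneg y)
    refine ⟨mkop (fun y n => Wn n y) (M * ‖T‖) (by positivity)
      (fun y z n => by simp) (fun r y n => by simp)
      (fun y n => hWnle n y), ?_, ?_⟩
    · intro u
      apply Subtype.ext; funext n
      have h1 := hWna n ⟨ι u, LinearMap.mem_range_self _ u⟩
      calc (mkop (fun y n => Wn n y) (M * ‖T‖) (by positivity)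
          (fun y z n => by simp) (fun r y n => by simp)
          (fun y n => hWnle n y)) (ι u) n = Wn n (ι u) := rfl
        _ = g n (T (eqv2.symm ⟨ι u, LinearMap.mem_range_self _ u⟩)) := h1
        _ = g n (T u) := by rw [hsymmι u]
        _ = S u n := (hScoord u n).symm
    · intro y
      exact mkop_norm_le _ _ _ _ _ _ y
  -- the final embedding Φ
  obtain ⟨Φ, hΦ⟩ : ∃ Φ : X →L[ℝ] ellInfty,
      ∀ x, Φ x = ψop (Q (J x)) + eop (J x - W (Q (J x))) :=
    ⟨ψop.comp (Q.comp J) + eop.comp ((J : X →L[ℝ] ellInfty) - W.comp (Q.comp J)),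
      fun x => by simp [ContinuousLinearMap.comp_apply]⟩
  set CΦ : ℝ := K * (6 * (M * ‖T‖) + 1) with hCΦdef
  have hCΦ : 0 < CΦ := by positivity
  have hΦlow : ∀ x, ‖x‖ ≤ CΦ * ‖Φ x‖ := by
    intro x
    have hxy := hΦ x
    set a := Q (J x) with ha
    set v := J x - W (Q (J x)) with hv
    have hvt : ∀ t, v t = Lf t 0 (Φ x) := by
      intro t
      rw [hxy, Lf_add, Lf_ψop_zero, Lf_eop]
      ring
    have hvnorm : ‖v‖ ≤ ‖Φ x‖ :=
      norm_le_of _ (norm_nonneg _) (fun t => by rw [hvt t]; exact Lf_abs _ _ _)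
    have hψa : ψop a = Φ x - eop v := by rw [hxy]; abel
    have hanorm : ‖a‖ ≤ 6 * ‖Φ x‖ := by
      have h1 := ψop_recover a
      rw [hψa] at h1
      have h2 : ‖Φ x - eop v‖ ≤ ‖Φ x‖ + ‖eop v‖ := norm_sub_le _ _
      have h3 := eop_norm_le v
      nlinarith
    have hJx : J x = W a + v := by rw [hv, ha]; abel
    have hJnorm : ‖J x‖ ≤ (6 * (M * ‖T‖) + 1) * ‖Φ x‖ := by
      rw [hJx]
      have h4 := hWb a
      have h5 : M * ‖T‖ * ‖a‖ ≤ M * ‖T‖ * (6 * ‖Φ x‖) := by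
        have h6 : (0:ℝ) ≤ M * ‖T‖ := by positivity
        nlinarith
      calc ‖W a + v‖ ≤ ‖W a‖ + ‖v‖ := norm_add_le _ _
        _ ≤ M * ‖T‖ * (6 * ‖Φ x‖) + ‖Φ x‖ := by
            have h7 := h4.trans h5
            linarith
        _ = (6 * (M * ‖T‖) + 1) * ‖Φ x‖ := by ring
    calc ‖x‖ ≤ K * ‖J x‖ := hJlow x
      _ ≤ K * ((6 * (M * ‖T‖) + 1) * ‖Φ x‖) := mul_le_mul_of_nonneg_left hJnorm hK0
      _ = CΦ * ‖Φ x‖ := by rw [hCΦdef]; ring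
  -- null sequences are in the range of Φ
  have hmem : ∀ y : ellInfty, Tendsto (fun n => y n) atTop (𝓝 (0:ℝ)) → ∃ x, Φ x = y := by
    intro y hy
    have hιu : ι (c0mk (fun n => y n) hy) = y := by
      apply Subtype.ext; funext n
      rw [hιcoord]
      rfl
    refine ⟨T (c0mk (fun n => y n) hy), ?_⟩
    rw [hΦ, ← hSJT, hQS, hWι, sub_self, map_zero, add_zero, hιu]
    exact ψop_of_null y hy
  -- assembling the answer
  have hanti : AntilipschitzWith CΦ.toNNReal Φ :=
    Φ.antilipschitz_of_bound (fun x => by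
      rw [Real.coe_toNNReal CΦ hCΦ.le]; exact hΦlow x)
  have hinjΦ : Function.Injective Φ := by
    intro x₁ x₂ h12
    have h := hΦlow (x₁ - x₂)
    rw [map_sub, h12, sub_self, norm_zero, mul_zero] at h
    exact sub_eq_zero.mp (norm_le_zero_iff.mp h)
  refine ⟨LinearMap.range (Φ : X →ₗ[ℝ] ellInfty), ?_, ?_, ?_⟩
  · have hrange : ((LinearMap.range (Φ : X →ₗ[ℝ] ellInfty) : Submodule ℝ ellInfty) :
        Set ellInfty) = Set.range Φ := by
      ext y
      simp [LinearMap.mem_range]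
    rw [hrange]
    exact hanti.isClosed_range Φ.uniformContinuous
  · intro y hy
    obtain ⟨x, hx⟩ := hmem y hy
    exact ⟨x, hx⟩
  · have hclosed : IsClosed ((LinearMap.range (Φ : X →ₗ[ℝ] ellInfty) :
        Submodule ℝ ellInfty) : Set ellInfty) := by
      have hrange : ((LinearMap.range (Φ : X →ₗ[ℝ] ellInfty) : Submodule ℝ ellInfty) :
          Set ellInfty) = Set.range Φ := by
        ext y
        simp [LinearMap.mem_range]
      rw [hrange]
      exact hanti.isClosed_range Φ.uniformContinuous
    haveI : CompleteSpace (LinearMap.range (Φ : X →ₗ[ℝ] ellInfty)) :=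
      hclosed.completeSpace_coe
    have hbij : Function.Bijective
        (Φ.codRestrict (LinearMap.range (Φ : X →ₗ[ℝ] ellInfty))
          (fun x => LinearMap.mem_range_self _ x)) := by
      constructor
      · intro x₁ x₂ h12
        apply hinjΦ
        exact Subtype.ext_iff.mp h12
      · rintro ⟨w, hw⟩
        obtain ⟨x, hx⟩ := hw
        exact ⟨x, Subtype.ext hx⟩
    exact ⟨ContinuousLinearEquiv.ofBijective _
      (LinearMap.ker_eq_bot_of_injective hbij.1) (LinearMap.range_eq_top.mpr hbij.2)⟩
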